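/- Let $\nu:(0,\infty)\to(0,\infty)$ satisfy conditions (H1) with constant $a_1$ (nonincreasing, absolutely continuous, $-\nu'(r)/r$ nonincreasing, $\nu(r)\le a_1\nu(r+1)$ for $r\ge1$, $\nu(r)\le a_1\nu(2r)$ for $0<r\le1$). For $x\in\mathbb{R}^d$ write $\hat x = (-x_1,x_2,\dots,x_d)$. Then for all $v,z\in\mathbb{R}^d$ with $v_1>0$, $z_1>0$: $\nu(|v-z|) - \nu(|v-\hat z|) \le \frac{3}{2}(a_1-1)\,|z-\hat z|\,\frac{\nu(|v-z|)}{1\wedge |v-z|}\left(1 + \frac{|v-\hat z|}{|v-z|}\right)$. -/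

import Mathlib

open MeasureTheory Set

/-- Reflection in the first coordinate: `x̂ = (-x₁, x₂, …, x_d)`. -/
noncomputable def reflFirst {d : ℕ} (x : EuclideanSpace ℝ (Fin d)) :
    EuclideanSpace ℝ (Fin d) :=
  WithLp.toLp 2 (fun i : Fin d => if (i : ℕ) = 0 then -x i else x i)

lemma aux_integrable (ν ν' : ℝ → ℝ)
    (hpos : ∀ r > (0:ℝ), 0 < ν r)
    (habs : ∀ r > (0:ℝ), ν r = -∫ ρ in Set.Ioi r, ν' ρ)
    {r : ℝ} (hr : 0 < r) : IntegrableOn ν' (Set.Ioi r) := by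
  by_contra h
  have h0 := habs r hr
  rw [integral_undef h] at h0
  simp only [neg_zero] at h0
  exact absurd h0 (hpos r hr).ne'

lemma aux_diff (ν ν' : ℝ → ℝ)
    (hpos : ∀ r > (0:ℝ), 0 < ν r)
    (habs : ∀ r > (0:ℝ), ν r = -∫ ρ in Set.Ioi r, ν' ρ)
    {a b : ℝ} (ha : 0 < a) (hab : a ≤ b) :
    ν a - ν b = ∫ ρ in Set.Ioc a b, -ν' ρ := by
  have hb : 0 < b := lt_of_lt_of_le ha hab
  have hIa := aux_integrable ν ν' hpos habs ha
  have hIb := aux_integrable ν ν' hpos habs hb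
  have hIoc : IntegrableOn ν' (Set.Ioc a b) := hIa.mono_set Set.Ioc_subset_Ioi_self
  have hsplit : ∫ ρ in Set.Ioi a, ν' ρ
      = (∫ ρ in Set.Ioc a b, ν' ρ) + ∫ ρ in Set.Ioi b, ν' ρ := by
    rw [← setIntegral_union (Set.Ioc_disjoint_Ioi le_rfl) measurableSet_Ioi hIoc hIb,
      Set.Ioc_union_Ioi_eq_Ioi hab]
  rw [habs a ha, habs b hb, integral_neg]
  linarith

lemma aux_upper (ν ν' : ℝ → ℝ)
    (hpos : ∀ r > (0:ℝ), 0 < ν r)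
    (habs : ∀ r > (0:ℝ), ν r = -∫ ρ in Set.Ioi r, ν' ρ)
    (hratio : ∀ u v : ℝ, 0 < u → u ≤ v → -ν' v / v ≤ -ν' u / u)
    {r₁ r₂ : ℝ} (h1 : 0 < r₁) (h12 : r₁ ≤ r₂) :
    ν r₁ - ν r₂ ≤ (-ν' r₁ / r₁) * ((r₂^2 - r₁^2)/2) := by
  rw [aux_diff ν ν' hpos habs h1 h12]
  have hI : IntegrableOn (fun ρ => -ν' ρ) (Set.Ioc r₁ r₂) :=
    ((aux_integrable ν ν' hpos habs h1).mono_set Set.Ioc_subset_Ioi_self).neg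
  have hI2 : IntegrableOn (fun ρ => (-ν' r₁ / r₁) * ρ) (Set.Ioc r₁ r₂) :=
    (continuous_const.mul continuous_id).integrableOn_Ioc
  calc ∫ ρ in Set.Ioc r₁ r₂, -ν' ρ
      ≤ ∫ ρ in Set.Ioc r₁ r₂, (-ν' r₁ / r₁) * ρ := by
        apply setIntegral_mono_on hI hI2 measurableSet_Ioc
        intro ρ hρ
        have hρ0 : 0 < ρ := lt_trans h1 hρ.1
        have h := hratio r₁ ρ h1 (le_of_lt hρ.1)
        rw [div_le_div_iff₀ hρ0 h1] at h
        rw [div_mul_eq_mul_div, le_div_iff₀ h1]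
        linarith
    _ = (-ν' r₁ / r₁) * ((r₂^2 - r₁^2)/2) := by
        rw [← intervalIntegral.integral_of_le h12, intervalIntegral.integral_const_mul,
          integral_id]

lemma aux_lower (ν ν' : ℝ → ℝ)
    (hpos : ∀ r > (0:ℝ), 0 < ν r)
    (habs : ∀ r > (0:ℝ), ν r = -∫ ρ in Set.Ioi r, ν' ρ)
    (hratio : ∀ u v : ℝ, 0 < u → u ≤ v → -ν' v / v ≤ -ν' u / u)
    {a r₁ : ℝ} (ha : 0 < a) (har : a ≤ r₁) :
    (-ν' r₁ / r₁) * ((r₁^2 - a^2)/2) ≤ ν a - ν r₁ := by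
  have h1 : 0 < r₁ := lt_of_lt_of_le ha har
  rw [aux_diff ν ν' hpos habs ha har]
  have hI : IntegrableOn (fun ρ => -ν' ρ) (Set.Ioc a r₁) :=
    ((aux_integrable ν ν' hpos habs ha).mono_set Set.Ioc_subset_Ioi_self).neg
  have hI2 : IntegrableOn (fun ρ => (-ν' r₁ / r₁) * ρ) (Set.Ioc a r₁) :=
    (continuous_const.mul continuous_id).integrableOn_Ioc
  calc (-ν' r₁ / r₁) * ((r₁^2 - a^2)/2)
      = ∫ ρ in Set.Ioc a r₁, (-ν' r₁ / r₁) * ρ := by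
        rw [← intervalIntegral.integral_of_le har, intervalIntegral.integral_const_mul,
          integral_id]
    _ ≤ ∫ ρ in Set.Ioc a r₁, -ν' ρ := by
        apply setIntegral_mono_on hI2 hI measurableSet_Ioc
        intro ρ hρ
        have hρ0 : 0 < ρ := lt_trans ha hρ.1
        have h := hratio ρ r₁ hρ0 hρ.2
        rw [div_le_div_iff₀ h1 hρ0] at h
        rw [div_mul_eq_mul_div, div_le_iff₀ h1]
        linarith

lemma aux_deriv_bound (ν ν' : ℝ → ℝ) (a₁ : ℝ) (ha₁ : 1 ≤ a₁)
    (hpos : ∀ r > (0:ℝ), 0 < ν r)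
    (habs : ∀ r > (0:ℝ), ν r = -∫ ρ in Set.Ioi r, ν' ρ)
    (hratio : ∀ u v : ℝ, 0 < u → u ≤ v → -ν' v / v ≤ -ν' u / u)
    (hdbl1 : ∀ r : ℝ, 1 ≤ r → ν r ≤ a₁ * ν (r + 1))
    (hdbl2 : ∀ r : ℝ, 0 < r → r ≤ 1 → ν r ≤ a₁ * ν (2 * r))
    {r₁ : ℝ} (h1 : 0 < r₁) :
    -ν' r₁ / r₁ ≤ 3 * (a₁ - 1) * ν r₁ / (min 1 r₁ * r₁) := by
  have hν := hpos r₁ h1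
  have hm : 0 < min 1 r₁ := lt_min one_pos h1
  have hm1 : min 1 r₁ ≤ 1 := min_le_left _ _
  have hmr : min 1 r₁ ≤ r₁ := min_le_right _ _
  have hc : (0:ℝ) ≤ (a₁ - 1) * ν r₁ := mul_nonneg (by linarith) hν.le
  rcases le_or_gt (-ν' r₁ / r₁) 0 with hq | hq
  · exact le_trans hq (div_nonneg (by nlinarith) (mul_pos hm h1).le)
  rcases le_or_gt r₁ 2 with hcase | hcase
  · have hlow := aux_lower ν ν' hpos habs hratio (show (0:ℝ) < r₁/2 by linarith) (show r₁/2 ≤ r₁ by linarith)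
    have hdb := hdbl2 (r₁/2) (by linarith) (by linarith)
    rw [show 2*(r₁/2) = r₁ by ring] at hdb
    have hkey : (-ν' r₁ / r₁) * ((r₁^2 - (r₁/2)^2)/2) ≤ (a₁ - 1) * ν r₁ := by linarith
    rw [le_div_iff₀ (mul_pos hm h1)]
    have h2' : (-ν' r₁ / r₁) * (min 1 r₁ * r₁) ≤ (-ν' r₁ / r₁) * r₁^2 := by
      apply mul_le_mul_of_nonneg_left _ hq.le
      nlinarith
    nlinarith
  · have hlow := aux_lower ν ν' hpos habs hratio (show (0:ℝ) < r₁ - 1 by linarith) (show r₁ - 1 ≤ r₁ by linarith)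
    have hdb := hdbl1 (r₁ - 1) (by linarith)
    rw [show r₁ - 1 + 1 = r₁ by ring] at hdb
    have hkey : (-ν' r₁ / r₁) * ((r₁^2 - (r₁-1)^2)/2) ≤ (a₁ - 1) * ν r₁ := by linarith
    have hmin : min 1 r₁ = 1 := min_eq_left (by linarith)
    rw [hmin, one_mul, le_div_iff₀ h1]
    nlinarith [mul_pos hq (show (0:ℝ) < 2*r₁ - 3/2 by linarith)]

theorem difference_levy_density_bound
    {d : ℕ} (hd : 0 < d)
    (ν ν' : ℝ → ℝ) (a₁ : ℝ) (ha₁ : 1 ≤ a₁)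
    (hpos : ∀ r > (0:ℝ), 0 < ν r)
    (hanti : ∀ u v : ℝ, 0 < u → u ≤ v → ν v ≤ ν u)
    (habs : ∀ r > (0:ℝ), ν r = -∫ ρ in Set.Ioi r, ν' ρ)
    (hratio : ∀ u v : ℝ, 0 < u → u ≤ v → -ν' v / v ≤ -ν' u / u)
    (hdbl1 : ∀ r : ℝ, 1 ≤ r → ν r ≤ a₁ * ν (r + 1))
    (hdbl2 : ∀ r : ℝ, 0 < r → r ≤ 1 → ν r ≤ a₁ * ν (2 * r)) :
    ∀ v z : EuclideanSpace ℝ (Fin d), v ⟨0, hd⟩ > 0 → z ⟨0, hd⟩ > 0 → v ≠ z →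
      ν ‖v - z‖ - ν ‖v - reflFirst z‖ ≤
        (3 / 2) * (a₁ - 1) * ‖z - reflFirst z‖ * (ν ‖v - z‖ / min 1 ‖v - z‖) *
          (1 + ‖v - reflFirst z‖ / ‖v - z‖) := by
  intro v z hv hz hvz
  set r₁ := ‖v - z‖ with hr₁def
  set r₂ := ‖v - reflFirst z‖ with hr₂def
  set s := ‖z - reflFirst z‖ with hsdef
  have h1 : 0 < r₁ := norm_sub_pos_iff.mpr hvz
  have h12 : r₁ ≤ r₂ := by
    rw [hr₁def, hr₂def, EuclideanSpace.norm_eq, EuclideanSpace.norm_eq]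
    apply Real.sqrt_le_sqrt
    apply Finset.sum_le_sum
    intro i _
    rcases eq_or_ne (i : ℕ) 0 with h0 | h0
    · have hi : i = ⟨0, hd⟩ := Fin.ext h0
      subst hi
      simp only [PiLp.sub_apply, reflFirst, PiLp.toLp_apply, Real.norm_eq_abs, sq_abs, if_true, eq_self_iff_true,
        if_pos trivial]
      nlinarith [mul_pos hv hz]
    · simp [PiLp.sub_apply, reflFirst, PiLp.toLp_apply, h0]
  have htri : r₂ - r₁ ≤ s := by
    have heq : v - reflFirst z = (v - z) + (z - reflFirst z) := by abel
    have h := norm_add_le (v - z) (z - reflFirst z)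
    rw [← heq] at h
    linarith
  have hupper := aux_upper ν ν' hpos habs hratio h1 h12
  have hE := aux_deriv_bound ν ν' a₁ ha₁ hpos habs hratio hdbl1 hdbl2 h1
  have hν := hpos r₁ h1
  have hm : 0 < min 1 r₁ := lt_min one_pos h1
  have hs : 0 ≤ s := norm_nonneg _
  have hc : (0:ℝ) ≤ (a₁ - 1) * ν r₁ := mul_nonneg (by linarith) hν.le
  have h2 : ν r₁ - ν r₂ ≤ (3*(a₁-1)*ν r₁/(min 1 r₁*r₁)) * ((r₂^2-r₁^2)/2) := by
    refine le_trans hupper ?_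
    apply mul_le_mul_of_nonneg_right hE
    nlinarith
  refine le_trans h2 ?_
  rw [div_mul_eq_mul_div, div_le_iff₀ (mul_pos hm h1)]
  have heq : (3/2)*(a₁-1)*s*(ν r₁/min 1 r₁)*(1+r₂/r₁)*(min 1 r₁*r₁)
      = (3/2)*(a₁-1)*s*ν r₁*(r₁+r₂) := by
    field_simp
  rw [heq]
  nlinarith [mul_nonneg (mul_nonneg hc (show (0:ℝ) ≤ s - (r₂ - r₁) by linarith))
    (show (0:ℝ) ≤ r₁ + r₂ by linarith)]
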